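/- Let V be a finite set of points in a metric space with all pairwise distances distinct. Every edge of the Euclidean Minimum Spanning Tree of V is an edge of the Relative Neighborhood Graph of V: if (u,v) ∈ E_EMST, then no point n ∈ V satisfies both d(n,u) < d(u,v) and d(n,v) < d(u,v). -/

import Mathlib

private lemma emst_split {X : Type*} (T : SimpleGraph X) (u v : X) {a b : X} (p : T.Walk a b) :
    (T.deleteEdges {s(u, v)}).Reachable a b ∨ (T.deleteEdges {s(u, v)}).Reachable a u ∨
      (T.deleteEdges {s(u, v)}).Reachable a v := by
  induction p with
  | nil => exact Or.inl (SimpleGraph.Reachable.refl _)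
  | @cons a c b hac q ih =>
    by_cases he : s(a, c) = s(u, v)
    · rw [Sym2.eq_iff] at he
      rcases he with ⟨rfl, rfl⟩ | ⟨rfl, rfl⟩
      · exact Or.inr (Or.inl (SimpleGraph.Reachable.refl _))
      · exact Or.inr (Or.inr (SimpleGraph.Reachable.refl _))
    · have hDac : (T.deleteEdges {s(u, v)}).Adj a c := by
        rw [SimpleGraph.deleteEdges_adj]
        exact ⟨hac, by simpa using he⟩
      rcases ih with h | h | h
      · exact Or.inl (hDac.reachable.trans h)
      · exact Or.inr (Or.inl (hDac.reachable.trans h))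
      · exact Or.inr (Or.inr (hDac.reachable.trans h))

open SimpleGraph in
private lemma emst_rng_aux {X : Type*} [MetricSpace X] [Fintype X]
    (T : SimpleGraph X) [Fintype T.edgeSet] (hT : T.IsTree)
    (hmin : ∀ (T' : SimpleGraph X) [Fintype T'.edgeSet], T'.IsTree →
      ∑ e ∈ T.edgeFinset, Sym2.lift ⟨dist, fun a b => dist_comm a b⟩ e
        ≤ ∑ e ∈ T'.edgeFinset, Sym2.lift ⟨dist, fun a b => dist_comm a b⟩ e)
    (u v n : X) (huv : T.Adj u v)
    (hnu : dist n u < dist u v) (hnv : dist n v < dist u v)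
    (hreach : (T.deleteEdges {s(u, v)}).Reachable n u) : False := by
  classical
  set D := T.deleteEdges {s(u, v)} with hD
  haveI : Nonempty X := hT.isConnected.nonempty
  have hnev : n ≠ v := by
    rintro rfl
    rw [dist_comm n u] at hnu
    exact lt_irrefl _ hnu
  have hneu : n ≠ u := by
    rintro rfl
    exact lt_irrefl _ hnv
  have hbridge : T.IsBridge s(u, v) :=
    isAcyclic_iff_forall_adj_isBridge.mp hT.IsAcyclic huv
  have hnotUV : ¬ D.Reachable u v := isBridge_iff.mp hbridge
  have hnotNV : ¬ D.Reachable n v := fun h => hnotUV (hreach.symm.trans h)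
  have hnvne : s(n, v) ∉ ({s(u, v)} : Set (Sym2 X)) := by
    simp [Sym2.eq_iff, hneu, hnev]
  have hnotAdjNV : ¬ T.Adj n v := by
    intro h
    have : D.Adj n v := by
      rw [hD, deleteEdges_adj]
      exact ⟨h, hnvne⟩
    exact hnotNV this.reachable
  set T' : SimpleGraph X := D ⊔ SimpleGraph.edge n v with hT'
  have hDle : D ≤ T' := le_sup_left
  have hT'adj : T'.Adj n v := by
    rw [hT', sup_adj, edge_adj]
    exact Or.inr ⟨Or.inl ⟨rfl, rfl⟩, hnev⟩
  have hT'edges : T'.edgeSet = (T.edgeSet \ {s(u, v)}) ∪ {s(n, v)} := by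
    rw [hT', edgeSet_sup, edge_edgeSet_of_ne hnev, hD, edgeSet_deleteEdges]
  -- T' is connected
  have hconn : T'.Connected := by
    have hvu : T'.Reachable v u :=
      (hT'adj.symm.reachable).trans (hreach.mono hDle)
    have hall : ∀ a : X, T'.Reachable a u := by
      intro a
      obtain ⟨p⟩ := hT.isConnected.preconnected a u
      rcases emst_split T u v p with h | h | h
      · exact h.mono hDle
      · exact h.mono hDle
      · exact (h.mono hDle).trans hvu
    exact Connected.mk (fun a b => (hall a).trans (hall b).symm)
  -- s(n,v) is a bridge of T'
  have hT'delete : ∀ a b : X, (T'.deleteEdges {s(n, v)}).Adj a b → D.Adj a b := by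
    intro a b h
    rw [deleteEdges_adj, hT', sup_adj, edge_adj] at h
    rcases h with ⟨hD' | hE, hne⟩
    · exact hD'
    · exfalso
      apply hne
      rcases hE.1 with ⟨rfl, rfl⟩ | ⟨rfl, rfl⟩
      · simp
      · simp [Sym2.eq_swap]
  have hbridge' : T'.IsBridge s(n, v) := by
    rw [isBridge_iff]
    intro h
    exact hnotNV (h.mono (fun a b hab => hT'delete a b hab))
  -- T' is acyclic
  have hacyclic : T'.IsAcyclic := by
    intro w c hc
    by_cases hmem : s(n, v) ∈ c.edges
    · exact ((isBridge_iff_adj_and_forall_cycle_notMem hT'adj).mp hbridge') c hc hmem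
    · have hsub : ∀ e ∈ c.edges, e ∈ T.edgeSet := by
        intro e he
        have hmem' : e ∈ T'.edgeSet := c.edges_subset_edgeSet he
        rw [hT'edges] at hmem'
        rcases hmem' with h | h
        · exact h.1
        · exact absurd (Set.mem_singleton_iff.mp h ▸ he) hmem
      exact hT.IsAcyclic (c.transfer T hsub) (hc.transfer hsub)
  have hT'tree : T'.IsTree := ⟨hconn, hacyclic⟩
  haveI : Fintype T'.edgeSet := Fintype.ofFinite _
  have huvmem : s(u, v) ∈ T.edgeFinset := by
    rw [mem_edgeFinset]; exact huv
  have hnvnotmem : s(n, v) ∉ T.edgeFinset := by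
    rw [mem_edgeFinset]; exact hnotAdjNV
  have hfin : T'.edgeFinset = insert s(n, v) (T.edgeFinset.erase s(u, v)) := by
    ext e
    rw [mem_edgeFinset, hT'edges]
    simp only [Set.mem_union, Set.mem_diff, Set.mem_singleton_iff, Finset.mem_insert,
      Finset.mem_erase, mem_edgeFinset]
    tauto
  set f : Sym2 X → ℝ := Sym2.lift ⟨dist, fun a b => dist_comm a b⟩ with hf
  have hnotin : s(n, v) ∉ T.edgeFinset.erase s(u, v) :=
    fun h => hnvnotmem (Finset.mem_of_mem_erase h)
  have hsum : ∑ e ∈ T'.edgeFinset, f e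
      = f s(n, v) + (∑ e ∈ T.edgeFinset, f e - f s(u, v)) := by
    rw [hfin, Finset.sum_insert hnotin, Finset.sum_erase_eq_sub huvmem]
  have hle := hmin T' hT'tree
  have hfnv : f s(n, v) = dist n v := by simp [hf]
  have hfuv : f s(u, v) = dist u v := by simp [hf]
  rw [hsum, hfnv, hfuv] at hle
  linarith

/-- Toussaint: every edge of a minimum spanning tree (w.r.t. the metric weight)
belongs to the Relative Neighborhood Graph: no point n satisfies both
d(n,u) < d(u,v) and d(n,v) < d(u,v). -/
theorem emst_subset_rng
    {X : Type*} [MetricSpace X] [Fintype X]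
    (hgen : ∀ a b c e : X, a ≠ b → c ≠ e → ({a, b} : Set X) ≠ {c, e} →
      dist a b ≠ dist c e)
    (T : SimpleGraph X) [Fintype T.edgeSet]
    (hT : T.IsTree)
    (hmin : ∀ (T' : SimpleGraph X) [Fintype T'.edgeSet], T'.IsTree →
      ∑ e ∈ T.edgeFinset, Sym2.lift ⟨dist, fun a b => dist_comm a b⟩ e
        ≤ ∑ e ∈ T'.edgeFinset, Sym2.lift ⟨dist, fun a b => dist_comm a b⟩ e)
    (u v : X) (huv : T.Adj u v) :
    ¬ ∃ n : X, dist n u < dist u v ∧ dist n v < dist u v := by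
  rintro ⟨n, hnu, hnv⟩
  classical
  obtain ⟨p⟩ := hT.isConnected.preconnected n u
  rcases emst_split T u v p with h | h | h
  · exact emst_rng_aux T hT hmin u v n huv hnu hnv h
  · exact emst_rng_aux T hT hmin u v n huv hnu hnv h
  · have h' : (T.deleteEdges {s(v, u)}).Reachable n v := by
      rwa [Sym2.eq_swap] at h
    refine emst_rng_aux T hT hmin v u n huv.symm ?_ ?_ h'
    · rwa [dist_comm v u]
    · rwa [dist_comm v u]
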